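/- Let A and B be nonnegative n×n real matrices and α ≥ 1/3. Then ‖A^{(α)} ∘ (Bᵀ)^{(α)} ∘ A^{(α)}‖ ≤ ρ((AᵀBᵀAᵀABA)^{(α)} ∘ (BAAᵀBᵀAᵀA)^{(α)} ∘ (AᵀABAAᵀBᵀ)^{(α)})^{1/6} ≤ ‖ABA‖^α, where ‖·‖ is the Euclidean operator norm. -/

import Mathlib

open Finset
open scoped NNReal

lemma sum_rpow_le_rpow_sum' {ι : Type*} (s : Finset ι) (u : ι → ℝ≥0) {p : ℝ} (hp : 1 ≤ p) :
    ∑ k ∈ s, u k ^ p ≤ (∑ k ∈ s, u k) ^ p := by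
  classical
  induction s using Finset.induction with
  | empty => simp
  | insert a s h ih =>
    rw [Finset.sum_insert h, Finset.sum_insert h]
    exact le_trans (add_le_add_right ih _) (NNReal.add_rpow_le_rpow_add _ _ hp)

lemma inner3_le {ι : Type*} (s : Finset ι) (a b c : ι → ℝ≥0) :
    ∑ k ∈ s, a k * b k * c k ≤
      (∑ k ∈ s, a k ^ (3:ℝ)) ^ ((1:ℝ)/3) * (∑ k ∈ s, b k ^ (3:ℝ)) ^ ((1:ℝ)/3) *
        (∑ k ∈ s, c k ^ (3:ℝ)) ^ ((1:ℝ)/3) := by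
  have hpq : (3:ℝ).HolderConjugate (3/2) := by constructor <;> norm_num
  have h1 : ∑ k ∈ s, a k * (b k * c k) ≤
      (∑ k ∈ s, a k ^ (3:ℝ)) ^ ((1:ℝ)/3) * (∑ k ∈ s, (b k * c k) ^ ((3:ℝ)/2)) ^ ((2:ℝ)/3) := by
    have := NNReal.inner_le_Lp_mul_Lq s a (fun k => b k * c k) hpq
    simpa [one_div] using this
  have h2 : ∑ k ∈ s, (b k * c k) ^ ((3:ℝ)/2) ≤
      (∑ k ∈ s, b k ^ (3:ℝ)) ^ ((1:ℝ)/2) * (∑ k ∈ s, c k ^ (3:ℝ)) ^ ((1:ℝ)/2) := by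
    have hpq2 : (2:ℝ).HolderConjugate 2 := by constructor <;> norm_num
    have := NNReal.inner_le_Lp_mul_Lq s (fun k => b k ^ ((3:ℝ)/2)) (fun k => c k ^ ((3:ℝ)/2)) hpq2
    calc ∑ k ∈ s, (b k * c k) ^ ((3:ℝ)/2)
        = ∑ k ∈ s, (b k ^ ((3:ℝ)/2)) * (c k ^ ((3:ℝ)/2)) := by
          refine Finset.sum_congr rfl fun k _ => ?_
          rw [NNReal.mul_rpow]
      _ ≤ (∑ k ∈ s, (b k ^ ((3:ℝ)/2)) ^ (2:ℝ)) ^ ((1:ℝ)/2) *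
            (∑ k ∈ s, (c k ^ ((3:ℝ)/2)) ^ (2:ℝ)) ^ ((1:ℝ)/2) := by simpa [one_div] using this
      _ = (∑ k ∈ s, b k ^ (3:ℝ)) ^ ((1:ℝ)/2) * (∑ k ∈ s, c k ^ (3:ℝ)) ^ ((1:ℝ)/2) := by
          congr 2 <;> refine Finset.sum_congr rfl fun k _ => ?_ <;>
            rw [← NNReal.rpow_mul] <;> norm_num
  calc ∑ k ∈ s, a k * b k * c k = ∑ k ∈ s, a k * (b k * c k) := by
        refine Finset.sum_congr rfl fun k _ => by ring
    _ ≤ (∑ k ∈ s, a k ^ (3:ℝ)) ^ ((1:ℝ)/3) * (∑ k ∈ s, (b k * c k) ^ ((3:ℝ)/2)) ^ ((2:ℝ)/3) := h1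
    _ ≤ (∑ k ∈ s, a k ^ (3:ℝ)) ^ ((1:ℝ)/3) *
          ((∑ k ∈ s, b k ^ (3:ℝ)) ^ ((1:ℝ)/2) * (∑ k ∈ s, c k ^ (3:ℝ)) ^ ((1:ℝ)/2)) ^ ((2:ℝ)/3) := by
        gcongr
    _ = _ := by
        rw [NNReal.mul_rpow, ← NNReal.rpow_mul, ← NNReal.rpow_mul, mul_assoc]
        norm_num

lemma hoelder3_nnreal {ι : Type*} (s : Finset ι) (F G H : ι → ℝ≥0) {α : ℝ} (hα : 1/3 ≤ α) :
    ∑ k ∈ s, (F k * G k * H k) ^ α ≤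
      ((∑ k ∈ s, F k) * (∑ k ∈ s, G k) * (∑ k ∈ s, H k)) ^ α := by
  have hα1 : (1:ℝ) ≤ 3 * α := by linarith
  have e1 : ∀ x : ℝ≥0, x ^ α = (x ^ ((1:ℝ)/3)) ^ (3 * α) := fun x => by
    rw [← NNReal.rpow_mul]; congr 1; ring
  calc ∑ k ∈ s, (F k * G k * H k) ^ α
      = ∑ k ∈ s, ((F k * G k * H k) ^ ((1:ℝ)/3)) ^ (3 * α) := by
        exact Finset.sum_congr rfl fun k _ => e1 _
    _ ≤ (∑ k ∈ s, (F k * G k * H k) ^ ((1:ℝ)/3)) ^ (3 * α) :=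
        sum_rpow_le_rpow_sum' s _ hα1
    _ ≤ (((∑ k ∈ s, F k) * (∑ k ∈ s, G k) * (∑ k ∈ s, H k)) ^ ((1:ℝ)/3)) ^ (3 * α) := by
        refine NNReal.rpow_le_rpow ?_ (by linarith)
        have := inner3_le s (fun k => F k ^ ((1:ℝ)/3)) (fun k => G k ^ ((1:ℝ)/3))
          (fun k => H k ^ ((1:ℝ)/3))
        have e2 : ∀ (u : ι → ℝ≥0), (fun k => (u k ^ ((1:ℝ)/3)) ^ (3:ℝ)) = fun k => u k := by
          intro u; funext k; rw [← NNReal.rpow_mul]; norm_num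
        calc ∑ k ∈ s, (F k * G k * H k) ^ ((1:ℝ)/3)
            = ∑ k ∈ s, (F k ^ ((1:ℝ)/3)) * (G k ^ ((1:ℝ)/3)) * (H k ^ ((1:ℝ)/3)) := by
              refine Finset.sum_congr rfl fun k _ => ?_
              rw [NNReal.mul_rpow, NNReal.mul_rpow]
          _ ≤ _ := le_trans (inner3_le s _ _ _) (by rw [e2 F, e2 G, e2 H]; exact le_of_eq (by rw [NNReal.mul_rpow, NNReal.mul_rpow]))
    _ = _ := (e1 _).symm

lemma hoelder3_real {ι : Type*} (s : Finset ι) (f g h : ι → ℝ) {α : ℝ} (hα : 1/3 ≤ α)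
    (hf : ∀ k ∈ s, 0 ≤ f k) (hg : ∀ k ∈ s, 0 ≤ g k) (hh : ∀ k ∈ s, 0 ≤ h k) :
    ∑ k ∈ s, (f k * g k * h k) ^ α ≤
      ((∑ k ∈ s, f k) * (∑ k ∈ s, g k) * (∑ k ∈ s, h k)) ^ α := by
  have key := hoelder3_nnreal s (fun k => (f k).toNNReal) (fun k => (g k).toNNReal)
    (fun k => (h k).toNNReal) hα
  have key' := NNReal.coe_le_coe.mpr key
  have ef : (∑ k ∈ s, ((f k).toNNReal : ℝ)) = ∑ k ∈ s, f k :=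
    Finset.sum_congr rfl fun k hk => Real.coe_toNNReal _ (hf k hk)
  have eg : (∑ k ∈ s, ((g k).toNNReal : ℝ)) = ∑ k ∈ s, g k :=
    Finset.sum_congr rfl fun k hk => Real.coe_toNNReal _ (hg k hk)
  have eh : (∑ k ∈ s, ((h k).toNNReal : ℝ)) = ∑ k ∈ s, h k :=
    Finset.sum_congr rfl fun k hk => Real.coe_toNNReal _ (hh k hk)
  calc ∑ k ∈ s, (f k * g k * h k) ^ α
      = ∑ k ∈ s, ((((f k).toNNReal * (g k).toNNReal * (h k).toNNReal) ^ α : ℝ≥0) : ℝ) := by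
        refine Finset.sum_congr rfl fun k hk => ?_
        rw [NNReal.coe_rpow, NNReal.coe_mul, NNReal.coe_mul,
          Real.coe_toNNReal _ (hf k hk), Real.coe_toNNReal _ (hg k hk),
          Real.coe_toNNReal _ (hh k hk)]
    _ ≤ ((((∑ k ∈ s, (f k).toNNReal) * (∑ k ∈ s, (g k).toNNReal) *
          (∑ k ∈ s, (h k).toNNReal)) ^ α : ℝ≥0) : ℝ) := by
        rw [← NNReal.coe_sum]; exact key'
    _ = _ := by
        rw [NNReal.coe_rpow, NNReal.coe_mul, NNReal.coe_mul, NNReal.coe_sum, NNReal.coe_sum,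
          NNReal.coe_sum, ef, eg, eh]

open Matrix

set_option linter.unusedSectionVars false

section Dom3
variable {N : Type*} [Fintype N] [DecidableEq N]

/-- Entrywise nonnegative matrices. -/
def EntryNonneg (M : Matrix N N ℝ) : Prop := ∀ i j, 0 ≤ M i j

lemma EntryNonneg.mul {M P : Matrix N N ℝ} (hM : EntryNonneg M) (hP : EntryNonneg P) :
    EntryNonneg (M * P) := fun i j =>
  Finset.sum_nonneg fun k _ => mul_nonneg (hM i k) (hP k j)

/-- `D` is entrywise dominated by the entrywise `α`-th power of the entrywise
product of `P`, `Q`, `R`. -/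
structure Dom3 (α : ℝ) (D P Q R : Matrix N N ℝ) : Prop where
  hD : EntryNonneg D
  hP : EntryNonneg P
  hQ : EntryNonneg Q
  hR : EntryNonneg R
  hle : ∀ i j, D i j ≤ (P i j * Q i j * R i j) ^ α

lemma Dom3.mul {α : ℝ} (hα : 1/3 ≤ α) {D P Q R D' P' Q' R' : Matrix N N ℝ}
    (h : Dom3 α D P Q R) (h' : Dom3 α D' P' Q' R') :
    Dom3 α (D * D') (P * P') (Q * Q') (R * R') := by
  refine ⟨h.hD.mul h'.hD, h.hP.mul h'.hP, h.hQ.mul h'.hQ, h.hR.mul h'.hR, fun i j => ?_⟩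
  rw [Matrix.mul_apply]
  calc ∑ k, D i k * D' k j
      ≤ ∑ k, ((P i k * P' k j) * (Q i k * Q' k j) * (R i k * R' k j)) ^ α := by
        refine Finset.sum_le_sum fun k _ => ?_
        calc D i k * D' k j
            ≤ (P i k * Q i k * R i k) ^ α * (P' k j * Q' k j * R' k j) ^ α := by
              exact mul_le_mul (h.hle i k) (h'.hle k j) (h'.hD k j)
                (Real.rpow_nonneg (mul_nonneg (mul_nonneg (h.hP i k) (h.hQ i k)) (h.hR i k)) _)
          _ = _ := by
              rw [← Real.mul_rpow (mul_nonneg (mul_nonneg (h.hP i k) (h.hQ i k)) (h.hR i k))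
                (mul_nonneg (mul_nonneg (h'.hP k j) (h'.hQ k j)) (h'.hR k j))]
              ring_nf
    _ ≤ ((∑ k, P i k * P' k j) * (∑ k, Q i k * Q' k j) * (∑ k, R i k * R' k j)) ^ α := by
        refine hoelder3_real _ _ _ _ hα ?_ ?_ ?_ <;> intro k _
        · exact mul_nonneg (h.hP i k) (h'.hP k j)
        · exact mul_nonneg (h.hQ i k) (h'.hQ k j)
        · exact mul_nonneg (h.hR i k) (h'.hR k j)
    _ = _ := by rw [Matrix.mul_apply, Matrix.mul_apply, Matrix.mul_apply]

lemma Dom3.pow {α : ℝ} (hα : 1/3 ≤ α) {D P Q R : Matrix N N ℝ}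
    (h : Dom3 α D P Q R) (m : ℕ) :
    Dom3 α (D ^ (m+1)) (P ^ (m+1)) (Q ^ (m+1)) (R ^ (m+1)) := by
  induction m with
  | zero => simpa using h
  | succ m ih =>
    rw [pow_succ, pow_succ, pow_succ, pow_succ]
    exact ih.mul hα h

end Dom3

section Norms
open scoped Matrix.Norms.L2Operator
variable {N : Type*} [Fintype N] [DecidableEq N] {𝕜 : Type*} [RCLike 𝕜]

lemma toEuclideanCLM_apply' (M : Matrix N N 𝕜) (x : EuclideanSpace 𝕜 N) (i : N) :
    (toEuclideanCLM (𝕜 := 𝕜) M x) i = ∑ j, M i j * x j := by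
  have h2 := congrFun (Matrix.ofLp_toEuclideanCLM (𝕜 := 𝕜) M x) i
  simpa [Matrix.mulVec, dotProduct] using h2

lemma coord_le_norm (x : EuclideanSpace 𝕜 N) (i : N) : ‖x i‖ ≤ ‖x‖ := by
  rw [EuclideanSpace.norm_eq]
  rw [show ‖x i‖ = Real.sqrt (‖x i‖ ^ 2) from (Real.sqrt_sq (norm_nonneg _)).symm]
  exact Real.sqrt_le_sqrt <| Finset.single_le_sum
    (f := fun j => ‖x j‖ ^ 2) (fun j _ => by positivity) (Finset.mem_univ i)

lemma euclid_norm_le_norm {𝕜' : Type*} [RCLike 𝕜'] (x : EuclideanSpace 𝕜 N)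
    (y : EuclideanSpace 𝕜' N) (h : ∀ i, ‖x i‖ ≤ ‖y i‖) : ‖x‖ ≤ ‖y‖ := by
  rw [EuclideanSpace.norm_eq, EuclideanSpace.norm_eq]
  refine Real.sqrt_le_sqrt <| Finset.sum_le_sum fun i _ => ?_
  exact pow_le_pow_left₀ (norm_nonneg _) (h i) 2

lemma euclid_norm_eq_norm {𝕜' : Type*} [RCLike 𝕜'] (x : EuclideanSpace 𝕜 N)
    (y : EuclideanSpace 𝕜' N) (h : ∀ i, ‖x i‖ = ‖y i‖) : ‖x‖ = ‖y‖ :=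
  le_antisymm (euclid_norm_le_norm x y fun i => (h i).le)
    (euclid_norm_le_norm y x fun i => (h i).ge)

lemma entry_le_norm (M : Matrix N N 𝕜) (i j : N) : ‖M i j‖ ≤ ‖M‖ := by
  have h1 : (toEuclideanCLM (𝕜 := 𝕜) M (EuclideanSpace.single j 1)) i = M i j := by
    rw [toEuclideanCLM_apply']
    simp [EuclideanSpace.single_apply]
  calc ‖M i j‖ = ‖(toEuclideanCLM (𝕜 := 𝕜) M (EuclideanSpace.single j 1)) i‖ := by rw [h1]
    _ ≤ ‖toEuclideanCLM (𝕜 := 𝕜) M (EuclideanSpace.single j 1)‖ := coord_le_norm _ i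
    _ ≤ ‖toEuclideanCLM (𝕜 := 𝕜) M‖ * ‖EuclideanSpace.single j (1:𝕜)‖ :=
        ContinuousLinearMap.le_opNorm _ _
    _ = ‖M‖ := by
        rw [EuclideanSpace.norm_single, norm_one, mul_one, Matrix.l2_opNorm_def]; rfl

lemma norm_le_sum_entries (M : Matrix N N 𝕜) : ‖M‖ ≤ ∑ i, ∑ j, ‖M i j‖ := by
  rw [Matrix.l2_opNorm_def]
  refine ContinuousLinearMap.opNorm_le_bound _ (by positivity) fun x => ?_
  have h1 : ∀ i, ‖(toEuclideanCLM (𝕜 := 𝕜) M x) i‖ ≤ (∑ j, ‖M i j‖) * ‖x‖ := by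
    intro i
    rw [toEuclideanCLM_apply', Finset.sum_mul]
    refine le_trans (norm_sum_le _ _) (Finset.sum_le_sum fun j _ => ?_)
    rw [norm_mul]
    exact mul_le_mul_of_nonneg_left (coord_le_norm x j) (norm_nonneg _)
  calc ‖toEuclideanCLM (𝕜 := 𝕜) M x‖
      ≤ ∑ i, ‖(toEuclideanCLM (𝕜 := 𝕜) M x) i‖ := by
        rw [EuclideanSpace.norm_eq]
        rw [show (∑ i, ‖(toEuclideanCLM (𝕜 := 𝕜) M x) i‖) =
          Real.sqrt ((∑ i, ‖(toEuclideanCLM (𝕜 := 𝕜) M x) i‖) ^ 2) from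
          (Real.sqrt_sq (by positivity)).symm]
        exact Real.sqrt_le_sqrt <| Finset.sum_sq_le_sq_sum_of_nonneg fun i _ => norm_nonneg _
    _ ≤ ∑ i, (∑ j, ‖M i j‖) * ‖x‖ := Finset.sum_le_sum fun i _ => h1 i
    _ = (∑ i, ∑ j, ‖M i j‖) * ‖x‖ := by rw [Finset.sum_mul]

lemma norm_mono_nonneg {P Q : Matrix N N ℝ} (hP : EntryNonneg P) (hPQ : ∀ i j, P i j ≤ Q i j) :
    ‖P‖ ≤ ‖Q‖ := by
  rw [Matrix.l2_opNorm_def]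
  refine ContinuousLinearMap.opNorm_le_bound _ (norm_nonneg _) fun x => ?_
  set y : EuclideanSpace ℝ N := (WithLp.equiv 2 (N → ℝ)).symm fun j => |x j| with hy
  have hyc : ∀ j, y j = |x j| := fun j => rfl
  have hxy : ‖y‖ = ‖x‖ := euclid_norm_eq_norm y x fun i => by
    rw [hyc]; simp [abs_abs]
  have hcoord : ∀ i, ‖(toEuclideanCLM (𝕜 := ℝ) P x) i‖ ≤
      ‖(toEuclideanCLM (𝕜 := ℝ) Q y) i‖ := by
    intro i
    rw [toEuclideanCLM_apply', toEuclideanCLM_apply']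
    have h2 : |∑ j, P i j * x j| ≤ ∑ j, Q i j * |x j| := by
      refine le_trans (Finset.abs_sum_le_sum_abs _ _) (Finset.sum_le_sum fun j _ => ?_)
      rw [abs_mul, abs_of_nonneg (hP i j)]
      exact mul_le_mul_of_nonneg_right (hPQ i j) (abs_nonneg _)
    have h3 : ∑ j, Q i j * |x j| ≤ |∑ j, Q i j * y j| := by
      simp only [hyc]
      exact le_abs_self _
    simpa [Real.norm_eq_abs] using le_trans h2 h3
  calc ‖toEuclideanCLM (𝕜 := ℝ) P x‖ ≤ ‖toEuclideanCLM (𝕜 := ℝ) Q y‖ :=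
        euclid_norm_le_norm _ _ hcoord
    _ ≤ ‖toEuclideanCLM (𝕜 := ℝ) Q‖ * ‖y‖ := ContinuousLinearMap.le_opNorm _ _
    _ = ‖Q‖ * ‖x‖ := by rw [hxy, Matrix.l2_opNorm_def]; rfl

end Norms

section Cmplx
open scoped Matrix.Norms.L2Operator
variable {N : Type*} [Fintype N] [DecidableEq N]

lemma map_ofReal_mul (M P : Matrix N N ℝ) :
    (M * P).map Complex.ofReal = M.map Complex.ofReal * P.map Complex.ofReal :=
  Matrix.map_mul (f := Complex.ofRealHom)

lemma map_ofReal_pow (M : Matrix N N ℝ) (k : ℕ) :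
    (M ^ k).map Complex.ofReal = (M.map Complex.ofReal) ^ k := by
  induction k with
  | zero => simp [Matrix.map_one]
  | succ k ih => rw [pow_succ, pow_succ, map_ofReal_mul, ih]

lemma conjTranspose_map_ofReal (M : Matrix N N ℝ) :
    (M.map Complex.ofReal)ᴴ = Mᵀ.map Complex.ofReal := by
  ext i j
  simp [Matrix.conjTranspose_apply, Matrix.map_apply, Complex.conj_ofReal]

lemma norm_map_ofReal {M : Matrix N N ℝ} (hM : EntryNonneg M) :
    ‖M.map Complex.ofReal‖ = ‖M‖ := by
  refine le_antisymm ?_ ?_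
  · rw [Matrix.l2_opNorm_def]
    refine ContinuousLinearMap.opNorm_le_bound _ (norm_nonneg _) fun x => ?_
    set y : EuclideanSpace ℝ N := (WithLp.equiv 2 (N → ℝ)).symm fun j => ‖x j‖ with hy
    have hyc : ∀ j, y j = ‖x j‖ := fun j => rfl
    have hxy : ‖y‖ = ‖x‖ := euclid_norm_eq_norm y x fun i => by
      rw [hyc]; simp
    have hcoord : ∀ i, ‖(toEuclideanCLM (𝕜 := ℂ) (M.map Complex.ofReal) x) i‖ ≤
        ‖(toEuclideanCLM (𝕜 := ℝ) M y) i‖ := by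
      intro i
      rw [toEuclideanCLM_apply', toEuclideanCLM_apply']
      have h2 : ‖∑ j, (M.map Complex.ofReal) i j * x j‖ ≤ ∑ j, M i j * ‖x j‖ := by
        refine le_trans (norm_sum_le _ _) (Finset.sum_le_sum fun j _ => ?_)
        rw [norm_mul, Matrix.map_apply, Complex.norm_real, Real.norm_eq_abs,
          abs_of_nonneg (hM i j)]
      refine le_trans h2 ?_
      have h3 : ∑ j, M i j * ‖x j‖ = ∑ j, M i j * y j := by
        refine Finset.sum_congr rfl fun j _ => by rw [hyc]
      rw [h3, Real.norm_eq_abs]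
      exact le_abs_self _
    calc ‖toEuclideanCLM (𝕜 := ℂ) (M.map Complex.ofReal) x‖
        ≤ ‖toEuclideanCLM (𝕜 := ℝ) M y‖ := euclid_norm_le_norm _ _ hcoord
      _ ≤ ‖toEuclideanCLM (𝕜 := ℝ) M‖ * ‖y‖ := ContinuousLinearMap.le_opNorm _ _
      _ = ‖M‖ * ‖x‖ := by rw [hxy, Matrix.l2_opNorm_def]; rfl
  · rw [Matrix.l2_opNorm_def (A := M)]
    refine ContinuousLinearMap.opNorm_le_bound _ (norm_nonneg _) fun x => ?_
    set z : EuclideanSpace ℂ N := (WithLp.equiv 2 (N → ℂ)).symm fun j => (x j : ℂ) with hz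
    have hzc : ∀ j, z j = (x j : ℂ) := fun j => rfl
    have hxz : ‖z‖ = ‖x‖ := euclid_norm_eq_norm z x fun i => by
      rw [hzc]; simp
    have hcoord : ∀ i, ‖(toEuclideanCLM (𝕜 := ℝ) M x) i‖ =
        ‖(toEuclideanCLM (𝕜 := ℂ) (M.map Complex.ofReal) z) i‖ := by
      intro i
      rw [toEuclideanCLM_apply', toEuclideanCLM_apply']
      have h4 : ∑ j, (M.map Complex.ofReal) i j * z j = ((∑ j, M i j * x j : ℝ) : ℂ) := by
        push_cast
        refine Finset.sum_congr rfl fun j _ => by rw [hzc, Matrix.map_apply]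
      rw [h4, Complex.norm_real]
    calc ‖toEuclideanCLM (𝕜 := ℝ) M x‖
        = ‖toEuclideanCLM (𝕜 := ℂ) (M.map Complex.ofReal) z‖ :=
          euclid_norm_eq_norm _ _ hcoord
      _ ≤ ‖toEuclideanCLM (𝕜 := ℂ) (M.map Complex.ofReal)‖ * ‖z‖ :=
          ContinuousLinearMap.le_opNorm _ _
      _ = ‖M.map Complex.ofReal‖ * ‖x‖ := by rw [hxz, Matrix.l2_opNorm_def]; rfl

lemma nnnorm_map_ofReal {M : Matrix N N ℝ} (hM : EntryNonneg M) :
    ‖M.map Complex.ofReal‖₊ = ‖M‖₊ :=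
  NNReal.coe_injective (by simp [coe_nnnorm, norm_map_ofReal hM])

end Cmplx

section SR
open Filter Topology
open scoped Matrix.Norms.L2Operator ENNReal NNReal
variable {N : Type*} [Fintype N] [DecidableEq N]

/-- The spectral radius, valued in `ℝ≥0∞`. -/
noncomputable def sr (M : Matrix N N ℝ) : ℝ≥0∞ := spectralRadius ℂ (M.map Complex.ofReal)

lemma gelfand (M : Matrix N N ℝ) :
    Tendsto (fun m : ℕ => (‖(M ^ m).map Complex.ofReal‖₊ : ℝ≥0∞) ^ (1/(m:ℝ)))
      atTop (𝓝 (sr M)) := by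
  have h := spectrum.pow_nnnorm_pow_one_div_tendsto_nhds_spectralRadius (M.map Complex.ofReal)
  simpa only [map_ofReal_pow, one_div, sr] using h

lemma sr_ne_top (M : Matrix N N ℝ) : sr M ≠ ⊤ := by
  have h := spectrum.spectralRadius_le_pow_nnnorm_pow_one_div ℂ (M.map Complex.ofReal) 0
  refine ne_top_of_le_ne_top ?_ h
  exact ENNReal.mul_ne_top (ENNReal.rpow_ne_top_of_nonneg (by norm_num) ENNReal.coe_ne_top)
    (ENNReal.rpow_ne_top_of_nonneg (by norm_num) ENNReal.coe_ne_top)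

lemma pow_entry_mono {P Q : Matrix N N ℝ} (hP : EntryNonneg P) (hPQ : ∀ i j, P i j ≤ Q i j)
    (m : ℕ) : EntryNonneg (P ^ m) ∧ ∀ i j, (P ^ m) i j ≤ (Q ^ m) i j := by
  induction m with
  | zero =>
    refine ⟨fun i j => ?_, fun i j => le_of_eq rfl⟩
    · simp only [pow_zero, Matrix.one_apply]
      split <;> norm_num
  | succ m ih =>
    obtain ⟨ih1, ih2⟩ := ih
    constructor
    · rw [pow_succ]; exact ih1.mul hP
    · intro i j
      rw [pow_succ, pow_succ, Matrix.mul_apply, Matrix.mul_apply]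
      refine Finset.sum_le_sum fun k _ => ?_
      exact mul_le_mul (ih2 i k) (hPQ k j) (hP k j) (le_trans (ih1 i k) (ih2 i k))

lemma sr_mono {P Q : Matrix N N ℝ} (hP : EntryNonneg P) (hPQ : ∀ i j, P i j ≤ Q i j) :
    sr P ≤ sr Q := by
  refine le_of_tendsto_of_tendsto' (gelfand P) (gelfand Q) fun m => ?_
  refine ENNReal.rpow_le_rpow ?_ (by positivity)
  rw [nnnorm_map_ofReal (pow_entry_mono hP hPQ m).1,
    nnnorm_map_ofReal (fun i j => le_trans ((pow_entry_mono hP hPQ m).1 i j)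
      ((pow_entry_mono hP hPQ m).2 i j))]
  exact_mod_cast norm_mono_nonneg (pow_entry_mono hP hPQ m).1 (pow_entry_mono hP hPQ m).2

lemma sr_pow (M : Matrix N N ℝ) (k : ℕ) (hk : 1 ≤ k) : sr (M ^ k) = (sr M) ^ k := by
  have h1 : Tendsto (fun m : ℕ => k * m) atTop atTop :=
    tendsto_atTop_mono (fun m => Nat.le_mul_of_pos_left m (by omega)) tendsto_id
  have h2 : Tendsto (fun m : ℕ =>
      ((‖(M ^ (k * m)).map Complex.ofReal‖₊ : ℝ≥0∞) ^ (1/((k*m:ℕ):ℝ))) ^ k)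
      atTop (𝓝 ((sr M) ^ k)) :=
    ((ENNReal.continuous_pow k).continuousAt.tendsto).comp ((gelfand M).comp h1)
  refine tendsto_nhds_unique (gelfand (M ^ k)) ?_
  refine Tendsto.congr' ?_ h2
  filter_upwards [eventually_ge_atTop 1] with m hm
  have hkm : ((k * m : ℕ) : ℝ) ≠ 0 := by positivity
  rw [← pow_mul, ← ENNReal.rpow_natCast (_ ^ (1/((k*m:ℕ):ℝ))) k, ← ENNReal.rpow_mul]
  congr 1
  field_simp
  norm_cast

lemma spectralRadius_mul_comm {A : Type*} [Ring A] [Algebra ℂ A] (a b : A) :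
    spectralRadius ℂ (a * b) = spectralRadius ℂ (b * a) := by
  have key : ∀ x y : A, spectralRadius ℂ (x * y) ≤ spectralRadius ℂ (y * x) := by
    intro x y
    refine iSup₂_le fun k hk => ?_
    rcases eq_or_ne k 0 with rfl | h0
    · simp
    · have hmem : k ∈ spectrum ℂ (y * x) := by
        have := (spectrum.unit_mem_mul_comm
          (a := x) (b := y) (r := Units.mk0 k h0)).mp (by simpa using hk)
        simpa using this
      exact le_iSup₂_of_le k hmem le_rfl
  exact le_antisymm (key a b) (key b a)

lemma sr_mul_comm (X Y : Matrix N N ℝ) : sr (X * Y) = sr (Y * X) := by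
  unfold sr
  rw [map_ofReal_mul, map_ofReal_mul]
  exact spectralRadius_mul_comm _ _

lemma sr_selfAdjoint {M : Matrix N N ℝ} (hM : Mᵀ = M) :
    sr M = (‖M.map Complex.ofReal‖₊ : ℝ≥0∞) := by
  have hsa : _root_.IsSelfAdjoint (M.map Complex.ofReal) := by
    show star _ = _
    rw [Matrix.star_eq_conjTranspose, conjTranspose_map_ofReal, hM]
  have hconst : Tendsto (fun _ : ℕ => (‖M.map Complex.ofReal‖₊ : ℝ≥0∞)) atTop
    (𝓝 (‖M.map Complex.ofReal‖₊ : ℝ≥0∞)) := tendsto_const_nhds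
  refine tendsto_nhds_unique ?_ hconst
  unfold sr
  convert
    (spectrum.pow_nnnorm_pow_one_div_tendsto_nhds_spectralRadius (M.map Complex.ofReal)).comp
      (tendsto_pow_atTop_atTop_of_one_lt one_lt_two) using 1
  refine funext fun n => ?_
  rw [Function.comp_apply, hsa.nnnorm_pow_two_pow, ENNReal.coe_pow, ← ENNReal.rpow_natCast,
    ← ENNReal.rpow_mul]
  simp

end SR

lemma ofReal_norm_eq_coe_nnnorm {E : Type*} [SeminormedAddGroup E] (a : E) :
    ENNReal.ofReal ‖a‖ = ((‖a‖₊ : NNReal) : ENNReal) :=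
  ENNReal.ofReal_eq_coe_nnreal _

section Main
open Filter Topology
open scoped Matrix.Norms.L2Operator ENNReal NNReal
variable {N : Type*} [Fintype N] [DecidableEq N]

lemma tendsto_rpow_one_div_const (c : ℝ≥0∞) (hc0 : c ≠ 0) (hct : c ≠ ⊤) :
    Tendsto (fun m : ℕ => c ^ (1/(m:ℝ))) atTop (𝓝 1) := by
  lift c to ℝ≥0 using hct
  have hc0' : c ≠ 0 := by simpa using hc0
  have hreal : Tendsto (fun m : ℕ => ((c:ℝ)) ^ (1/(m:ℝ))) atTop (𝓝 1) := by
    have h0 : Tendsto (fun m : ℕ => 1/(m:ℝ)) atTop (𝓝 0) := tendsto_one_div_atTop_nhds_zero_nat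
    have hc : Tendsto (fun _ : ℕ => (c:ℝ)) atTop (𝓝 (c:ℝ)) := tendsto_const_nhds
    have := hc.rpow h0 (Or.inl (by exact_mod_cast hc0'))
    simpa using this
  have hnn : Tendsto (fun m : ℕ => c ^ (1/(m:ℝ))) atTop (𝓝 (1 : ℝ≥0)) := by
    rw [← NNReal.tendsto_coe]
    simpa [NNReal.coe_rpow] using hreal
  have := ENNReal.tendsto_coe.mpr hnn
  simp only [ENNReal.coe_rpow_of_ne_zero hc0'] at this
  simpa using this

lemma sr_le_of_dom3 [Nonempty N] {α : ℝ} (hα : 1/3 ≤ α) {D P Q R : Matrix N N ℝ}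
    (h : Dom3 α D P Q R) : sr D ≤ (sr P * sr Q * sr R) ^ α := by
  have hα0 : (0:ℝ) ≤ α := by linarith
  set creal : ℝ := ((Fintype.card N : ℝ))^2 with hcreal
  have hcreal0 : 0 < creal := by
    have : 0 < Fintype.card N := Fintype.card_pos
    positivity
  -- the real inequality for each m ≥ 1
  have key : ∀ m : ℕ, 1 ≤ m →
      ‖D ^ m‖ ≤ creal * (‖P ^ m‖ * ‖Q ^ m‖ * ‖R ^ m‖) ^ α := by
    intro m hm
    obtain ⟨m', rfl⟩ : ∃ m', m = m' + 1 := ⟨m - 1, by omega⟩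
    have h' := h.pow hα m'
    have hPn : (0:ℝ) ≤ ‖P ^ (m'+1)‖ := norm_nonneg _
    have hQn : (0:ℝ) ≤ ‖Q ^ (m'+1)‖ := norm_nonneg _
    have hRn : (0:ℝ) ≤ ‖R ^ (m'+1)‖ := norm_nonneg _
    calc ‖D ^ (m'+1)‖ ≤ ∑ i, ∑ j, ‖(D ^ (m'+1)) i j‖ := norm_le_sum_entries _
      _ ≤ ∑ i : N, ∑ j : N, (‖P ^ (m'+1)‖ * ‖Q ^ (m'+1)‖ * ‖R ^ (m'+1)‖) ^ α := by
          refine Finset.sum_le_sum fun i _ => Finset.sum_le_sum fun j _ => ?_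
          rw [Real.norm_eq_abs, abs_of_nonneg (h'.hD i j)]
          refine le_trans (h'.hle i j) (Real.rpow_le_rpow ?_ ?_ hα0)
          · exact mul_nonneg (mul_nonneg (h'.hP i j) (h'.hQ i j)) (h'.hR i j)
          · have e1 : (P ^ (m'+1)) i j ≤ ‖P ^ (m'+1)‖ := by
              refine le_trans (le_abs_self _) ?_
              rw [← Real.norm_eq_abs]; exact entry_le_norm _ i j
            have e2 : (Q ^ (m'+1)) i j ≤ ‖Q ^ (m'+1)‖ := by
              refine le_trans (le_abs_self _) ?_
              rw [← Real.norm_eq_abs]; exact entry_le_norm _ i j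
            have e3 : (R ^ (m'+1)) i j ≤ ‖R ^ (m'+1)‖ := by
              refine le_trans (le_abs_self _) ?_
              rw [← Real.norm_eq_abs]; exact entry_le_norm _ i j
            exact mul_le_mul (mul_le_mul e1 e2 (h'.hQ i j) hPn) e3 (h'.hR i j)
              (mul_nonneg hPn hQn)
      _ = creal * (‖P ^ (m'+1)‖ * ‖Q ^ (m'+1)‖ * ‖R ^ (m'+1)‖) ^ α := by
          rw [Finset.sum_const, Finset.sum_const]
          simp [hcreal, mul_assoc, pow_two]
  -- pass to ℝ≥0∞
  set c : ℝ≥0∞ := ENNReal.ofReal creal with hc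
  have hc0 : c ≠ 0 := by
    simp [hc, ENNReal.ofReal_eq_zero, not_le, hcreal0]
  have hct : c ≠ ⊤ := ENNReal.ofReal_ne_top
  have keyE : ∀ m : ℕ, 1 ≤ m →
      (‖(D ^ m).map Complex.ofReal‖₊ : ℝ≥0∞) ≤
        c * ((‖(P ^ m).map Complex.ofReal‖₊ : ℝ≥0∞) * ‖(Q ^ m).map Complex.ofReal‖₊ *
          ‖(R ^ m).map Complex.ofReal‖₊) ^ α := by
    intro m hm
    obtain ⟨m', rfl⟩ : ∃ m', m = m' + 1 := ⟨m - 1, by omega⟩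
    have h' := h.pow hα m'
    rw [nnnorm_map_ofReal h'.hD, nnnorm_map_ofReal h'.hP, nnnorm_map_ofReal h'.hQ,
      nnnorm_map_ofReal h'.hR]
    rw [← ofReal_norm_eq_coe_nnnorm, ← ofReal_norm_eq_coe_nnnorm, ← ofReal_norm_eq_coe_nnnorm,
      ← ofReal_norm_eq_coe_nnnorm]
    calc ENNReal.ofReal ‖D ^ (m'+1)‖
        ≤ ENNReal.ofReal (creal * (‖P ^ (m'+1)‖ * ‖Q ^ (m'+1)‖ * ‖R ^ (m'+1)‖) ^ α) :=
          ENNReal.ofReal_le_ofReal (key _ (by omega))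
      _ = _ := by
          rw [ENNReal.ofReal_mul hcreal0.le,
            ← ENNReal.ofReal_rpow_of_nonneg (by positivity) hα0,
            ENNReal.ofReal_mul (by positivity), ENNReal.ofReal_mul (by positivity)]
  -- limits
  have tP : Tendsto (fun m : ℕ =>
      ((‖(P ^ m).map Complex.ofReal‖₊ : ℝ≥0∞) ^ (1/(m:ℝ))) ^ α) atTop (𝓝 ((sr P) ^ α)) :=
    ((ENNReal.continuous_rpow_const (y := α)).continuousAt.tendsto).comp (gelfand P)
  have tQ : Tendsto (fun m : ℕ =>
      ((‖(Q ^ m).map Complex.ofReal‖₊ : ℝ≥0∞) ^ (1/(m:ℝ))) ^ α) atTop (𝓝 ((sr Q) ^ α)) :=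
    ((ENNReal.continuous_rpow_const (y := α)).continuousAt.tendsto).comp (gelfand Q)
  have tR : Tendsto (fun m : ℕ =>
      ((‖(R ^ m).map Complex.ofReal‖₊ : ℝ≥0∞) ^ (1/(m:ℝ))) ^ α) atTop (𝓝 ((sr R) ^ α)) :=
    ((ENNReal.continuous_rpow_const (y := α)).continuousAt.tendsto).comp (gelfand R)
  have hfinP : (sr P) ^ α ≠ ⊤ := ENNReal.rpow_ne_top_of_nonneg hα0 (sr_ne_top P)
  have hfinQ : (sr Q) ^ α ≠ ⊤ := ENNReal.rpow_ne_top_of_nonneg hα0 (sr_ne_top Q)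
  have hfinR : (sr R) ^ α ≠ ⊤ := ENNReal.rpow_ne_top_of_nonneg hα0 (sr_ne_top R)
  have tPQ := ENNReal.Tendsto.mul tP (Or.inr hfinQ) tQ (Or.inr hfinP)
  have tPQR := ENNReal.Tendsto.mul tPQ (Or.inr hfinR) tR
    (Or.inr (ENNReal.mul_ne_top hfinP hfinQ))
  have tC := tendsto_rpow_one_div_const c hc0 hct
  have tRHS := ENNReal.Tendsto.mul tC (Or.inl one_ne_zero) tPQR (Or.inr ENNReal.one_ne_top)
  have hle : sr D ≤ 1 * ((sr P) ^ α * (sr Q) ^ α * (sr R) ^ α) := by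
    refine le_of_tendsto_of_tendsto (gelfand D) tRHS ?_
    filter_upwards [eventually_ge_atTop 1] with m hm
    have hstep := ENNReal.rpow_le_rpow (keyE m hm) (by positivity : (0:ℝ) ≤ 1/(m:ℝ))
    refine le_trans hstep (le_of_eq ?_)
    rw [ENNReal.mul_rpow_of_nonneg _ _ (by positivity : (0:ℝ) ≤ 1/(m:ℝ))]
    congr 1
    rw [← ENNReal.rpow_mul, mul_comm α (1/(m:ℝ)), ENNReal.rpow_mul,
      ENNReal.mul_rpow_of_nonneg _ _ (by positivity : (0:ℝ) ≤ 1/(m:ℝ)),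
      ENNReal.mul_rpow_of_nonneg _ _ (by positivity : (0:ℝ) ≤ 1/(m:ℝ)),
      ENNReal.mul_rpow_of_nonneg _ _ hα0, ENNReal.mul_rpow_of_nonneg _ _ hα0]
  calc sr D ≤ 1 * ((sr P) ^ α * (sr Q) ^ α * (sr R) ^ α) := hle
    _ = (sr P * sr Q * sr R) ^ α := by
        rw [one_mul, ENNReal.mul_rpow_of_nonneg _ _ hα0, ENNReal.mul_rpow_of_nonneg _ _ hα0]

end Main

open Matrix

/-- Spectral radius of a real matrix: max modulus of its (complex) eigenvalues. -/
noncomputable def specRad {N : Type*} [Fintype N] [DecidableEq N] (A : Matrix N N ℝ) : ℝ :=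
  (spectralRadius ℂ (A.map Complex.ofReal)).toReal

/-- Operator norm induced by the Euclidean (ℓ²) norm. -/
noncomputable def l2OpNorm {N : Type*} [Fintype N] [DecidableEq N] (A : Matrix N N ℝ) : ℝ :=
  ‖Matrix.toEuclideanCLM (𝕜 := ℝ) A‖

/-- Entrywise α-th power (with the convention 0^0 = 1, as for `Real.rpow`). -/
noncomputable def hadPow {N : Type*} (A : Matrix N N ℝ) (α : ℝ) : Matrix N N ℝ :=
  fun i j => A i j ^ α

section Assembly
open scoped Matrix.Norms.L2Operator ENNReal NNReal
variable {N : Type*} [Fintype N] [DecidableEq N]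

lemma had_entry (X Y Z : Matrix N N ℝ) (α : ℝ) (i j : N) :
    (hadPow X α ⊙ hadPow Y α ⊙ hadPow Z α) i j = X i j ^ α * Y i j ^ α * Z i j ^ α := by
  simp [Matrix.hadamard_apply, hadPow]

lemma specRad_eq_toReal_sr (M : Matrix N N ℝ) : specRad M = (sr M).toReal := rfl

lemma l2OpNorm_eq_norm (M : Matrix N N ℝ) : l2OpNorm M = ‖M‖ := (Matrix.l2_opNorm_def M).symm

end Assembly

open scoped Matrix.Norms.L2Operator ENNReal NNReal in
theorem stmt18 {N : Type*} [Fintype N] [DecidableEq N] (A B : Matrix N N ℝ)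
    (hA : ∀ i j, 0 ≤ A i j) (hB : ∀ i j, 0 ≤ B i j) (α : ℝ) (hα : (1:ℝ)/3 ≤ α) :
    l2OpNorm (hadPow A α ⊙ hadPow Bᵀ α ⊙ hadPow A α) ≤
        specRad (hadPow (Aᵀ * Bᵀ * Aᵀ * A * B * A) α ⊙
            hadPow (B * A * Aᵀ * Bᵀ * Aᵀ * A) α ⊙
            hadPow (Aᵀ * A * B * A * Aᵀ * Bᵀ) α) ^ ((1 : ℝ) / 6) ∧
      specRad (hadPow (Aᵀ * Bᵀ * Aᵀ * A * B * A) α ⊙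
            hadPow (B * A * Aᵀ * Bᵀ * Aᵀ * A) α ⊙
            hadPow (Aᵀ * A * B * A * Aᵀ * Bᵀ) α) ^ ((1 : ℝ) / 6) ≤
        l2OpNorm (A * B * A) ^ α := by
  classical
  have hα0 : (0:ℝ) < α := by linarith
  rcases isEmpty_or_nonempty N with hN | hN
  · -- trivial case: empty index type
    have hsub : Subsingleton (Matrix N N ℝ) := inferInstanceAs (Subsingleton (N → N → ℝ))
    have hsubC : Subsingleton (Matrix N N ℂ) := inferInstanceAs (Subsingleton (N → N → ℂ))
    have hnorm0 : ∀ X : Matrix N N ℝ, l2OpNorm X = 0 := by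
      intro X
      rw [show X = 0 from Subsingleton.elim X 0]
      unfold l2OpNorm
      rw [map_zero, norm_zero]
    have hspec0 : ∀ X : Matrix N N ℝ, specRad X = 0 := by
      intro X
      unfold specRad
      rw [spectrum.SpectralRadius.of_subsingleton (𝕜 := ℂ)]
      rfl
    constructor
    · rw [hnorm0]
      exact Real.rpow_nonneg ENNReal.toReal_nonneg _
    · rw [hspec0, hnorm0, Real.zero_rpow (by norm_num), Real.zero_rpow (ne_of_gt hα0)]
  -- main case
  set C : Matrix N N ℝ := hadPow A α ⊙ hadPow Bᵀ α ⊙ hadPow A α with hCdef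
  set M₁ : Matrix N N ℝ := Aᵀ * Bᵀ * Aᵀ * A * B * A with hM1def
  set M₂ : Matrix N N ℝ := B * A * Aᵀ * Bᵀ * Aᵀ * A with hM2def
  set M₃ : Matrix N N ℝ := Aᵀ * A * B * A * Aᵀ * Bᵀ with hM3def
  set Had : Matrix N N ℝ := hadPow M₁ α ⊙ hadPow M₂ α ⊙ hadPow M₃ α with hHaddef
  set G : Matrix N N ℝ := A * B * A with hGdef
  have hAt : EntryNonneg Aᵀ := fun i j => hA j i
  have hBt : EntryNonneg Bᵀ := fun i j => hB j i
  have hA' : EntryNonneg A := hA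
  have hB' : EntryNonneg B := hB
  have hM1 : EntryNonneg M₁ := ((((hAt.mul hBt).mul hAt).mul hA').mul hB').mul hA'
  have hM2 : EntryNonneg M₂ := ((((hB'.mul hA').mul hAt).mul hBt).mul hAt).mul hA'
  have hM3 : EntryNonneg M₃ := ((((hAt.mul hA').mul hB').mul hA').mul hAt).mul hBt
  have hG : EntryNonneg G := (hA'.mul hB').mul hA'
  have hC : EntryNonneg C := fun i j => by
    rw [hCdef, had_entry]
    have := hA i j; have := hB j i
    positivity
  have hCt : EntryNonneg Cᵀ := fun i j => hC j i
  have hHad : EntryNonneg Had := fun i j => by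
    rw [hHaddef, had_entry]
    have := hM1 i j; have := hM2 i j; have := hM3 i j
    positivity
  -- base Dom3 facts for the six slots
  have entC : ∀ i j, C i j = A i j ^ α * B j i ^ α * A i j ^ α := fun i j => by
    rw [hCdef, had_entry]; rfl
  have dom1 : Dom3 α Cᵀ Aᵀ Aᵀ B := by
    refine ⟨hCt, hAt, hAt, hB', fun i j => le_of_eq ?_⟩
    rw [Matrix.transpose_apply, entC]
    simp only [Matrix.transpose_apply]
    rw [Real.mul_rpow (mul_nonneg (hA j i) (hA j i)) (hB i j),
      Real.mul_rpow (hA j i) (hA j i)]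
    ring
  have dom2 : Dom3 α C Bᵀ A A := by
    refine ⟨hC, hBt, hA', hA', fun i j => le_of_eq ?_⟩
    rw [entC]
    simp only [Matrix.transpose_apply]
    rw [Real.mul_rpow (mul_nonneg (hB j i) (hA i j)) (hA i j),
      Real.mul_rpow (hB j i) (hA i j)]
    ring
  have dom3 : Dom3 α Cᵀ Aᵀ B Aᵀ := by
    refine ⟨hCt, hAt, hB', hAt, fun i j => le_of_eq ?_⟩
    rw [Matrix.transpose_apply, entC]
    simp only [Matrix.transpose_apply]
    rw [Real.mul_rpow (mul_nonneg (hA j i) (hB i j)) (hA j i),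
      Real.mul_rpow (hA j i) (hB i j)]
  have dom4 : Dom3 α C A A Bᵀ := by
    refine ⟨hC, hA', hA', hBt, fun i j => le_of_eq ?_⟩
    rw [entC]
    simp only [Matrix.transpose_apply]
    rw [Real.mul_rpow (mul_nonneg (hA i j) (hA i j)) (hB j i),
      Real.mul_rpow (hA i j) (hA i j)]
    ring
  have dom5 : Dom3 α Cᵀ B Aᵀ Aᵀ := by
    refine ⟨hCt, hB', hAt, hAt, fun i j => le_of_eq ?_⟩
    rw [Matrix.transpose_apply, entC]
    simp only [Matrix.transpose_apply]
    rw [Real.mul_rpow (mul_nonneg (hB i j) (hA j i)) (hA j i),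
      Real.mul_rpow (hB i j) (hA j i)]
    ring
  have dom6 : Dom3 α C A Bᵀ A := by
    refine ⟨hC, hA', hBt, hA', fun i j => le_of_eq ?_⟩
    rw [entC]
    simp only [Matrix.transpose_apply]
    rw [Real.mul_rpow (mul_nonneg (hA i j) (hB j i)) (hA i j),
      Real.mul_rpow (hA i j) (hB j i)]
  have bigdom : Dom3 α (Cᵀ * C * Cᵀ * C * Cᵀ * C) M₁ M₃ M₂ :=
    ((((dom1.mul hα dom2).mul hα dom3).mul hα dom4).mul hα dom5).mul hα dom6
  -- part 1
  have hS3le : ∀ i j, (Cᵀ * C * Cᵀ * C * Cᵀ * C) i j ≤ Had i j := by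
    intro i j
    refine le_trans (bigdom.hle i j) (le_of_eq ?_)
    rw [hHaddef, had_entry, Real.mul_rpow (mul_nonneg (hM1 i j) (hM3 i j)) (hM2 i j),
      Real.mul_rpow (hM1 i j) (hM3 i j)]
    ring
  have hsr1 : sr (Cᵀ * C * Cᵀ * C * Cᵀ * C) ≤ sr Had := sr_mono bigdom.hD hS3le
  have hpow3 : Cᵀ * C * Cᵀ * C * Cᵀ * C = (Cᵀ * C) ^ 3 := by
    rw [pow_succ, pow_succ, pow_one]
    simp only [Matrix.mul_assoc]
  have hSsym : (Cᵀ * C)ᵀ = Cᵀ * C := by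
    rw [Matrix.transpose_mul, Matrix.transpose_transpose]
  have hsrS : sr (Cᵀ * C) = (‖(Cᵀ * C).map Complex.ofReal‖₊ : ℝ≥0∞) := sr_selfAdjoint hSsym
  have hCnorm : ‖(Cᵀ * C).map Complex.ofReal‖₊ =
      ‖C.map Complex.ofReal‖₊ * ‖C.map Complex.ofReal‖₊ := by
    rw [map_ofReal_mul, ← conjTranspose_map_ofReal]
    exact Matrix.l2_opNNNorm_conjTranspose_mul_self _
  have part1 : l2OpNorm C ≤ specRad Had ^ ((1:ℝ)/6) := by
    have hchain : ((‖C.map Complex.ofReal‖₊ : ℝ≥0∞) * ‖C.map Complex.ofReal‖₊) ^ 3 ≤ sr Had := by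
      calc ((‖C.map Complex.ofReal‖₊ : ℝ≥0∞) * ‖C.map Complex.ofReal‖₊) ^ 3
          = (sr (Cᵀ * C)) ^ 3 := by rw [hsrS, hCnorm]; push_cast; ring
        _ = sr ((Cᵀ * C) ^ 3) := (sr_pow _ 3 (by norm_num)).symm
        _ = sr (Cᵀ * C * Cᵀ * C * Cᵀ * C) := by rw [← hpow3]
        _ ≤ sr Had := hsr1
    have hreal : (‖C.map Complex.ofReal‖ * ‖C.map Complex.ofReal‖) ^ 3 ≤ specRad Had := by
      have := ENNReal.toReal_mono (sr_ne_top Had) hchain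
      rw [specRad_eq_toReal_sr]
      refine le_trans (le_of_eq ?_) this
      simp
    have hx : l2OpNorm C = ‖C.map Complex.ofReal‖ := by
      rw [l2OpNorm_eq_norm, norm_map_ofReal hC]
    have hx0 : 0 ≤ l2OpNorm C := by rw [hx]; exact norm_nonneg _
    have h6 : (l2OpNorm C) ^ (6:ℕ) ≤ specRad Had := by
      refine le_trans (le_of_eq ?_) hreal
      rw [hx]; ring
    calc l2OpNorm C = ((l2OpNorm C ^ (6:ℕ)) : ℝ) ^ ((1:ℝ)/6) := by
          rw [← Real.rpow_natCast (l2OpNorm C) 6, ← Real.rpow_mul hx0]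
          norm_num
      _ ≤ specRad Had ^ ((1:ℝ)/6) :=
          Real.rpow_le_rpow (by positivity) h6 (by norm_num)
  -- part 2
  have dombase : Dom3 α Had M₁ M₂ M₃ := by
    refine ⟨hHad, hM1, hM2, hM3, fun i j => le_of_eq ?_⟩
    rw [hHaddef, had_entry, Real.mul_rpow (mul_nonneg (hM1 i j) (hM2 i j)) (hM3 i j),
      Real.mul_rpow (hM1 i j) (hM2 i j)]
  have hmain : sr Had ≤ (sr M₁ * sr M₂ * sr M₃) ^ α := sr_le_of_dom3 hα dombase
  have hs2 : sr M₂ = sr M₁ := by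
    have e2 : M₂ = (B * A) * (Aᵀ * Bᵀ * Aᵀ * A) := by
      rw [hM2def]; simp only [Matrix.mul_assoc]
    have e1 : M₁ = (Aᵀ * Bᵀ * Aᵀ * A) * (B * A) := by
      rw [hM1def]; simp only [Matrix.mul_assoc]
    rw [e2, e1, sr_mul_comm]
  have hs3 : sr M₃ = sr M₁ := by
    have e3 : M₃ = (Aᵀ * A * B * A) * (Aᵀ * Bᵀ) := by
      rw [hM3def]; simp only [Matrix.mul_assoc]
    have e1 : M₁ = (Aᵀ * Bᵀ) * (Aᵀ * A * B * A) := by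
      rw [hM1def]; simp only [Matrix.mul_assoc]
    rw [e3, e1, sr_mul_comm]
  have hs1 : sr M₁ = (‖G.map Complex.ofReal‖₊ : ℝ≥0∞) * ‖G.map Complex.ofReal‖₊ := by
    have e0 : M₁ = Gᵀ * G := by
      rw [hM1def, hGdef]
      simp only [Matrix.transpose_mul, Matrix.mul_assoc]
    have hsym : M₁ᵀ = M₁ := by
      rw [e0, Matrix.transpose_mul, Matrix.transpose_transpose]
    rw [sr_selfAdjoint hsym, e0, map_ofReal_mul, ← conjTranspose_map_ofReal,
      Matrix.l2_opNNNorm_conjTranspose_mul_self]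
    push_cast
    ring
  have part2 : specRad Had ^ ((1:ℝ)/6) ≤ l2OpNorm G ^ α := by
    have hg : l2OpNorm G = ‖G.map Complex.ofReal‖ := by
      rw [l2OpNorm_eq_norm, norm_map_ofReal hG]
    have hg0 : (0:ℝ) ≤ ‖G.map Complex.ofReal‖ := norm_nonneg _
    have hchain2 : sr Had ≤ (((‖G.map Complex.ofReal‖₊ : ℝ≥0∞)) ^ (6:ℕ)) ^ α := by
      refine le_trans hmain (le_of_eq ?_)
      rw [hs2, hs3, hs1]
      congr 1
      ring
    have hrealch : specRad Had ≤ (‖G.map Complex.ofReal‖ ^ (6:ℕ)) ^ α := by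
      have htop : ((((‖G.map Complex.ofReal‖₊ : ℝ≥0∞)) ^ (6:ℕ)) ^ α) ≠ ⊤ :=
        ENNReal.rpow_ne_top_of_nonneg hα0.le (by simp [ENNReal.pow_ne_top])
      have := ENNReal.toReal_mono htop hchain2
      rw [specRad_eq_toReal_sr]
      refine le_trans this (le_of_eq ?_)
      rw [← ENNReal.toReal_rpow, ENNReal.toReal_pow, ENNReal.coe_toReal, coe_nnnorm]
    calc specRad Had ^ ((1:ℝ)/6)
        ≤ ((‖G.map Complex.ofReal‖ ^ (6:ℕ)) ^ α) ^ ((1:ℝ)/6) :=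
          Real.rpow_le_rpow (ENNReal.toReal_nonneg) hrealch (by norm_num)
      _ = l2OpNorm G ^ α := by
          rw [hg, ← Real.rpow_natCast (‖G.map Complex.ofReal‖) 6, ← Real.rpow_mul hg0,
            ← Real.rpow_mul hg0]
          congr 1
          ring
  exact ⟨part1, part2⟩
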